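/- A unital *-homomorphism h : A → B between unital C*-algebras reflects commutativity (i.e. h(x)h(y) = h(y)h(x) implies xy = yx) if and only if the induced monotone map C(h) : C(A) → C(B) between posets of commutative unital C*-subalgebras has a right adjoint (equivalently, forms a Galois connection with some monotone map C(B) → C(A)). -/

import Mathlib

/-- The poset of commutative unital C*-subalgebras of a unital C*-algebra `A`. -/
def CommCStarSub (A : Type*) [CStarAlgebra A] : Type _ :=
  {S : StarSubalgebra ℂ A // IsClosed (S : Set A) ∧ ∀ x ∈ S, ∀ y ∈ S, x * y = y * x}

instance (A : Type*) [CStarAlgebra A] : PartialOrder (CommCStarSub A) :=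
  Subtype.partialOrder _

section Aux

variable {A : Type*} [CStarAlgebra A]

private lemma half_cancel {u v : A} (hyp : u + u = v + v) : u = v := by
  have h2 : (2:ℂ) • u = (2:ℂ) • v := by rw [two_smul, two_smul]; exact hyp
  calc u = (2:ℂ)⁻¹ • ((2:ℂ) • u) := by
        rw [smul_smul, inv_mul_cancel₀ two_ne_zero, one_smul]
    _ = (2:ℂ)⁻¹ • ((2:ℂ) • v) := by rw [h2]
    _ = v := by rw [smul_smul, inv_mul_cancel₀ two_ne_zero, one_smul]

private lemma sa_I_smul (w : A) : IsSelfAdjoint (Complex.I • (w - star w)) := by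
  have e : star (Complex.I • (w - star w)) = (-Complex.I) • (star w - w) := by
    rw [star_smul, star_sub, star_star, Complex.star_def, Complex.conj_I]
  rw [IsSelfAdjoint, e, neg_smul, ← smul_neg, neg_sub]

private lemma commute_of_halves {k a : A} (hc : Commute (k + k) a) : Commute k a :=
  half_cancel (by
    have := hc.eq
    rw [add_mul, mul_add] at this
    exact this)

private lemma commute_unsmul {k w : A} (hc : Commute k (Complex.I • w)) : Commute k w := by
  have := hc.smul_right (-Complex.I)
  rwa [smul_smul, neg_mul, Complex.I_mul_I, neg_neg, one_smul] at this

private lemma commute_unsmul' {a w : A} (hc : Commute (Complex.I • w) a) : Commute w a := by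
  have := hc.smul_left (-Complex.I)
  rwa [smul_smul, neg_mul, Complex.I_mul_I, neg_neg, one_smul] at this

/-- For a normal element `w` commuting with its adjoint, `‖w * w‖ = ‖w‖ * ‖w‖`. -/
private lemma normal_norm_sq (w : A) (hw : Commute w (star w)) : ‖w * w‖ = ‖w‖ * ‖w‖ := by
  have sa_sq : ∀ s : A, IsSelfAdjoint s → ‖s * s‖ = ‖s‖ * ‖s‖ := by
    intro s hs
    have e : star s * s = s * s := by rw [hs.star_eq]
    rw [← e]
    exact CStarRing.norm_star_mul_self (x := s)
  have key : star (w * w) * (w * w) = (star w * w) * (star w * w) := by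
    rw [star_mul]
    calc star w * star w * (w * w) = star w * (star w * w) * w := by
          rw [mul_assoc, mul_assoc, mul_assoc]
      _ = star w * (w * star w) * w := by rw [hw.symm.eq]
      _ = (star w * w) * (star w * w) := by
          rw [mul_assoc, mul_assoc, mul_assoc]
  have e1 : ‖w * w‖ * ‖w * w‖ = (‖w‖ * ‖w‖) * (‖w‖ * ‖w‖) := by
    calc ‖w * w‖ * ‖w * w‖ = ‖star (w * w) * (w * w)‖ := CStarRing.norm_star_mul_self.symm
      _ = ‖(star w * w) * (star w * w)‖ := by rw [key]
      _ = ‖star w * w‖ * ‖star w * w‖ := sa_sq _ (IsSelfAdjoint.star_mul_self w)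
      _ = (‖w‖ * ‖w‖) * (‖w‖ * ‖w‖) := by rw [CStarRing.norm_star_mul_self]
  rcases mul_self_eq_mul_self_iff.mp e1 with hh | hh
  · exact hh
  · nlinarith [norm_nonneg (w * w), norm_nonneg w, sq_nonneg ‖w‖]

/-- The commutative C*-subalgebra generated by a normal element is commutative. -/
private lemma elemental_comm (a : A) [IsStarNormal a] :
    ∀ u ∈ StarAlgebra.elemental ℂ a, ∀ v ∈ StarAlgebra.elemental ℂ a, u * v = v * u := by
  intro u hu v hv
  have := mul_comm (⟨u, hu⟩ : StarAlgebra.elemental ℂ a) ⟨v, hv⟩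
  simpa [Subtype.ext_iff] using this

private lemma real_factorial_bound {c M : ℝ} (hc0 : 0 ≤ c)
    (hb : ∀ k : ℕ, ((2 ^ k).factorial : ℝ) * c ^ (2 ^ k) ≤ M ^ (2 ^ k)) : c = 0 := by
  by_contra hc
  have hcpos : 0 < c := lt_of_le_of_ne hc0 (Ne.symm hc)
  have ht : Filter.Tendsto (fun n : ℕ => (M / c) ^ n / (n.factorial : ℝ))
      Filter.atTop (nhds 0) :=
    (Real.summable_pow_div_factorial (M / c)).tendsto_atTop_zero
  have hev := ht.eventually_lt_const one_pos
  obtain ⟨N, hN⟩ := Filter.eventually_atTop.mp hev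
  set n : ℕ := 2 ^ N with hn
  have hNn : N ≤ n := (Nat.lt_two_pow_self).le
  have h1 : (M / c) ^ n / (n.factorial : ℝ) < 1 := hN n hNn
  have hfacpos : (0:ℝ) < (n.factorial : ℝ) := by exact_mod_cast n.factorial_pos
  have h2 : (M / c) ^ n < (n.factorial : ℝ) := by
    rwa [div_lt_one hfacpos] at h1
  have h3 : M ^ n < (n.factorial : ℝ) * c ^ n := by
    rw [div_pow] at h2
    have := (div_lt_iff₀ (by positivity)).mp h2
    linarith
  exact absurd (hb N) (not_le.mpr h3)

end Aux

/-- A unital *-homomorphism reflects commutativity iff the induced monotone map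
`C(h) : C(A) → C(B)` has a right adjoint (forms a Galois connection with some
monotone map `C(B) → C(A)`). -/
theorem stmt_4 {A B : Type*} [CStarAlgebra A] [CStarAlgebra B]
    (h : A →⋆ₐ[ℂ] B) :
    (∀ x y : A, h x * h y = h y * h x → x * y = y * x) ↔
      (∃ R : CommCStarSub B → CommCStarSub A, Monotone R ∧
        ∀ (C : CommCStarSub A) (D : CommCStarSub B),
          (C.1.map h ≤ D.1 ↔ C.1 ≤ (R D).1)) := by
  have hcont : Continuous h :=
    AddMonoidHomClass.continuous_of_bound h 1 fun a => by
      simpa using NonUnitalStarAlgHom.norm_apply_le h a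
  constructor
  · -- reflecting implies right adjoint: take `R D = h⁻¹(D)`.
    intro hrefl
    refine ⟨fun D => ⟨D.1.comap h, ?_, ?_⟩, ?_, ?_⟩
    · simpa [StarSubalgebra.coe_comap] using D.2.1.preimage hcont
    · intro x hx y hy
      exact hrefl x y (D.2.2 _ hx _ hy)
    · intro D₁ D₂ hle
      exact StarSubalgebra.comap_mono hle
    · intro C D
      exact StarSubalgebra.map_le_iff_le_comap
  · -- a right adjoint implies reflecting.
    rintro ⟨R, -, hgal⟩ x y hcomm
    -- Every normal element whose image lies in `D` belongs to `R D`.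
    have memR : ∀ a : A, IsStarNormal a → ∀ D : CommCStarSub B, h a ∈ D.1 → a ∈ (R D).1 := by
      intro a ha D hmem
      haveI := ha
      have hmaple : (StarAlgebra.elemental ℂ a).map h ≤ D.1 := by
        rintro _ ⟨u, hu, rfl⟩
        have h1 : (StarAlgebra.adjoin ℂ {a} : StarSubalgebra ℂ A) ≤ D.1.comap h := by
          apply StarAlgebra.adjoin_le
          simpa [Set.singleton_subset_iff] using hmem
        have h3 : h u ∈ closure (h '' ((StarAlgebra.adjoin ℂ ({a} : Set A)) : Set A)) :=
          image_closure_subset_closure_image hcont ⟨u, hu, rfl⟩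
        have h4 : h '' ((StarAlgebra.adjoin ℂ ({a} : Set A)) : Set A) ⊆ (D.1 : Set B) := by
          rintro _ ⟨v, hv, rfl⟩; exact h1 hv
        exact D.2.1.closure_subset_iff.mpr h4 h3
      exact (hgal ⟨StarAlgebra.elemental ℂ a, StarAlgebra.elemental.isClosed ℂ a,
        elemental_comm a⟩ D).mp hmaple (StarAlgebra.elemental.self_mem ℂ a)
    -- self-adjoint elements of the kernel commute with all self-adjoint elements
    have sa_comm : ∀ k, h k = 0 → IsSelfAdjoint k → ∀ a, IsSelfAdjoint a → Commute k a := by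
      intro k hk hks a has
      haveI : IsStarNormal (h a) := (has.map h).isStarNormal
      set D : CommCStarSub B :=
        ⟨StarAlgebra.elemental ℂ (h a), StarAlgebra.elemental.isClosed ℂ (h a),
          elemental_comm (h a)⟩ with hD
      have h1 : k ∈ (R D).1 := memR k hks.isStarNormal D (by rw [hk]; exact zero_mem _)
      have h2 : a ∈ (R D).1 := memR a has.isStarNormal D (StarAlgebra.elemental.self_mem ℂ (h a))
      exact (R D).2.2 k h1 a h2
    -- elements of the kernel are central
    have central : ∀ k, h k = 0 → ∀ a : A, Commute k a := by
      have key : ∀ k, h k = 0 → ∀ a : A, IsSelfAdjoint a → Commute k a := by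
        intro k hk a ha
        have hk1 : h (k + star k) = 0 := by rw [map_add, map_star, hk]; simp
        have hk2 : h (Complex.I • (k - star k)) = 0 := by
          rw [map_smul, map_sub, map_star, hk]; simp
        have c1 := sa_comm _ hk1 (IsSelfAdjoint.add_star_self k) a ha
        have c2 := sa_comm _ hk2 (sa_I_smul k) a ha
        have c2' : Commute (k - star k) a := commute_unsmul' c2
        have csum : Commute (k + k) a := by
          have := c1.add_left c2'
          rwa [add_add_sub_cancel] at this
        exact commute_of_halves csum
      intro k hk a
      have c1 := key k hk (a + star a) (IsSelfAdjoint.add_star_self a)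
      have c2 := key k hk _ (sa_I_smul a)
      have c2' : Commute k (a - star a) := commute_unsmul c2
      have csum : Commute k (a + a) := by
        have := c1.add_right c2'
        rwa [add_add_sub_cancel] at this
      exact (commute_of_halves csum.symm).symm
    -- the commutator is central
    set z : A := x * y - y * x with hzdef
    have hz0 : h z = 0 := by
      rw [hzdef, map_sub, map_mul, map_mul, hcomm, sub_self]
    have hzc : ∀ a : A, Commute z a := central z hz0
    -- the iterated commutator machinery
    set Dm : A → A := fun w => x * w - w * x with hDm
    have comm_pow : ∀ m : ℕ, Dm (y ^ (m + 1)) = (m + 1) • (z * y ^ m) := by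
      intro m
      induction m with
      | zero => simp [hDm, hzdef]
      | succ m ih =>
        have e1 : y ^ (m + 2) = y * y ^ (m + 1) := by rw [← pow_succ']
        calc Dm (y ^ (m + 2)) = x * (y * y ^ (m + 1)) - y * y ^ (m + 1) * x := by rw [e1]
          _ = z * y ^ (m + 1) + y * (x * y ^ (m + 1) - y ^ (m + 1) * x) := by
              rw [hzdef]; noncomm_ring
          _ = z * y ^ (m + 1) + y * ((m + 1) • (z * y ^ m)) := by rw [show
                x * y ^ (m + 1) - y ^ (m + 1) * x = (m + 1) • (z * y ^ m) from ih]
          _ = z * y ^ (m + 1) + (m + 1) • (y * (z * y ^ m)) := by rw [mul_smul_comm]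
          _ = z * y ^ (m + 1) + (m + 1) • (z * y ^ (m + 1)) := by
              rw [show y * (z * y ^ m) = z * y ^ (m + 1) from by
                rw [← mul_assoc, ← (hzc y).eq, mul_assoc, ← pow_succ']]
          _ = (m + 2) • (z * y ^ (m + 1)) := by rw [succ_nsmul' (z * y ^ (m + 1)) (m + 1)]
    have it_smul : ∀ (n c : ℕ) (w : A), Dm^[n] (c • w) = c • Dm^[n] w := by
      intro n
      induction n with
      | zero => intro c w; simp
      | succ n ih =>
        intro c w
        simp only [Function.iterate_succ_apply]
        rw [show Dm (c • w) = c • Dm w from by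
          simp only [hDm, smul_sub, mul_smul_comm, smul_mul_assoc], ih]
    have it_zmul : ∀ (n : ℕ) (w : A), Dm^[n] (z * w) = z * Dm^[n] w := by
      intro n
      induction n with
      | zero => intro w; simp
      | succ n ih =>
        intro w
        have e : Dm (z * w) = z * Dm w := by
          have e1 : x * (z * w) = z * (x * w) := by
            rw [← mul_assoc, ← (hzc x).eq, mul_assoc]
          have e2 : z * w * x = z * (w * x) := mul_assoc _ _ _
          simp only [hDm]
          rw [e1, e2, ← mul_sub]
        simp only [Function.iterate_succ_apply]
        rw [e, ih]
    have iter_main : ∀ (k n : ℕ),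
        Dm^[k] (y ^ (n + k)) = ((n + k).descFactorial k) • (z ^ k * y ^ n) := by
      intro k
      induction k with
      | zero => intro n; simp
      | succ k ih =>
        intro n
        calc Dm^[k + 1] (y ^ (n + (k + 1)))
            = Dm^[k] ((n + k + 1) • (z * y ^ (n + k))) := by
              rw [Function.iterate_succ_apply]
              congr 1
              exact comm_pow (n + k)
          _ = (n + k + 1) • Dm^[k] (z * y ^ (n + k)) := it_smul k _ _
          _ = (n + k + 1) • (z * Dm^[k] (y ^ (n + k))) := by rw [it_zmul]
          _ = (n + k + 1) • (z * (((n + k).descFactorial k) • (z ^ k * y ^ n))) := by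
              rw [ih n]
          _ = ((n + k + 1) * (n + k).descFactorial k) • (z ^ (k + 1) * y ^ n) := by
              rw [mul_smul_comm, smul_smul, ← mul_assoc, ← pow_succ']
          _ = ((n + (k + 1)).descFactorial (k + 1)) • (z ^ (k + 1) * y ^ n) := by
              rw [show n + (k + 1) = (n + k) + 1 from rfl, Nat.succ_descFactorial_succ]
    have final_eq : ∀ n : ℕ, Dm^[n] (y ^ n) = (n.factorial) • z ^ n := by
      intro n
      simpa [Nat.descFactorial_self] using iter_main n 0
    -- norm bound on iterates
    have it_bound : ∀ (n : ℕ) (w : A), ‖Dm^[n] w‖ ≤ (2 * ‖x‖) ^ n * ‖w‖ := by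
      intro n
      induction n with
      | zero => intro w; simp
      | succ n ih =>
        intro w
        have e : ‖Dm (Dm^[n] w)‖ ≤ 2 * ‖x‖ * ‖Dm^[n] w‖ := by
          calc ‖Dm (Dm^[n] w)‖ = ‖x * Dm^[n] w - Dm^[n] w * x‖ := rfl
            _ ≤ ‖x * Dm^[n] w‖ + ‖Dm^[n] w * x‖ := norm_sub_le _ _
            _ ≤ ‖x‖ * ‖Dm^[n] w‖ + ‖Dm^[n] w‖ * ‖x‖ := by
                gcongr <;> [exact norm_mul_le _ _; exact norm_mul_le _ _]
            _ = 2 * ‖x‖ * ‖Dm^[n] w‖ := by ring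
        calc ‖Dm^[n + 1] w‖ = ‖Dm (Dm^[n] w)‖ := by rw [Function.iterate_succ_apply']
          _ ≤ 2 * ‖x‖ * ‖Dm^[n] w‖ := e
          _ ≤ 2 * ‖x‖ * ((2 * ‖x‖) ^ n * ‖w‖) := by
              have := ih w
              have hx2 : (0:ℝ) ≤ 2 * ‖x‖ := by positivity
              nlinarith [norm_nonneg (Dm^[n] w)]
          _ = (2 * ‖x‖) ^ (n + 1) * ‖w‖ := by ring
    -- norm of powers of the central (hence normal) element z
    have normpow : ∀ k : ℕ, ‖z ^ (2 ^ k)‖ = ‖z‖ ^ (2 ^ k) := by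
      intro k
      induction k with
      | zero => simp
      | succ k ih =>
        calc ‖z ^ (2 ^ (k + 1))‖ = ‖z ^ (2 ^ k) * z ^ (2 ^ k)‖ := by
              rw [pow_succ, pow_mul, sq]
          _ = ‖z ^ (2 ^ k)‖ * ‖z ^ (2 ^ k)‖ :=
              normal_norm_sq _ ((hzc _).pow_left _)
          _ = ‖z‖ ^ (2 ^ k) * ‖z‖ ^ (2 ^ k) := by rw [ih]
          _ = ‖z‖ ^ (2 ^ (k + 1)) := by rw [← pow_add]; congr 1; omega
    -- combine everything
    have hM : ∀ k : ℕ, (((2 ^ k : ℕ).factorial : ℝ)) * ‖z‖ ^ (2 ^ k : ℕ) ≤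
        (2 * ‖x‖ * ‖y‖) ^ (2 ^ k : ℕ) := by
      intro k
      have npos : 0 < 2 ^ k := Nat.pow_pos (by norm_num)
      calc (((2 ^ k : ℕ).factorial : ℝ)) * ‖z‖ ^ (2 ^ k : ℕ)
          = (((2 ^ k : ℕ).factorial : ℝ)) * ‖z ^ (2 ^ k : ℕ)‖ := by rw [normpow k]
        _ = ‖((2 ^ k : ℕ).factorial) • z ^ (2 ^ k : ℕ)‖ := by
            rw [← Nat.cast_smul_eq_nsmul ℝ, norm_smul, Real.norm_natCast]
        _ = ‖Dm^[2 ^ k] (y ^ (2 ^ k : ℕ))‖ := by rw [final_eq]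
        _ ≤ (2 * ‖x‖) ^ (2 ^ k : ℕ) * ‖y ^ (2 ^ k : ℕ)‖ := it_bound _ _
        _ ≤ (2 * ‖x‖) ^ (2 ^ k : ℕ) * ‖y‖ ^ (2 ^ k : ℕ) := by
            have := norm_pow_le' y npos
            have hx2 : (0:ℝ) ≤ (2 * ‖x‖) ^ (2 ^ k : ℕ) := by positivity
            nlinarith
        _ = (2 * ‖x‖ * ‖y‖) ^ (2 ^ k : ℕ) := by ring
    have hznorm : ‖z‖ = 0 := real_factorial_bound (norm_nonneg z) hM
    have hz : z = 0 := norm_eq_zero.mp hznorm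
    rw [hzdef] at hz
    exact sub_eq_zero.mp hz
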